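/- Let X be a metrizable compact Hausdorff space and Φ ∈ C(O(X)). Then the functions O(O(X)) → ℝ defined by M ↦ sup{M(π_φ) : φ ∈ C(X), π_φ ≤ Φ pointwise on O(X)} and M ↦ inf{M(π_φ) : φ ∈ C(X), π_φ ≥ Φ pointwise on O(X)} are continuous. -/

import Mathlib

/-- The set of normed, weakly additive, order-preserving functionals on `C(X, ℝ)`. -/
def OF (X : Type*) [TopologicalSpace X] : Set (C(X, ℝ) → ℝ) :=
  {ν | ν 1 = 1 ∧ (∀ (φ : C(X, ℝ)) (c : ℝ), ν (φ + ContinuousMap.const X c) = ν φ + c) ∧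
    ∀ φ ψ : C(X, ℝ), φ ≤ ψ → ν φ ≤ ν ψ}

/-- For `φ ∈ C(X, ℝ)`, the evaluation map `π_φ : O(X) → ℝ`. -/
def piO (X : Type*) [TopologicalSpace X] (φ : C(X, ℝ)) : C(↥(OF X), ℝ) :=
  ⟨fun ν => ν.1 φ, (continuous_apply φ).comp continuous_subtype_val⟩

/-- The monad multiplication `μ_O X : O(O(X)) → O(X)`, `μ_O X (M) (φ) = M (π_φ)`. -/
def muO (X : Type*) [TopologicalSpace X] (M : ↥(OF (↥(OF X)))) : ↥(OF X) := by
  refine ⟨fun φ => M.1 (piO X φ), ?_, ?_, ?_⟩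
  · have h1 : piO X (1 : C(X, ℝ)) = 1 := by
      ext ν; exact ν.2.1
    show M.1 (piO X 1) = 1
    rw [h1]; exact M.2.1
  · intro φ c
    have h : piO X (φ + ContinuousMap.const X c)
        = piO X φ + ContinuousMap.const _ c := by
      ext ν; exact ν.2.2.1 φ c
    show M.1 (piO X (φ + ContinuousMap.const X c)) = M.1 (piO X φ) + c
    rw [h]; exact M.2.2.1 _ c
  · intro φ ψ h
    exact M.2.2.2 _ _ (fun ν => ν.2.2.2 φ ψ h)

namespace OFAux

variable {X : Type*} [TopologicalSpace X]

lemma map_const (ν : ↥(OF X)) (c : ℝ) : ν.1 (ContinuousMap.const X c) = c := by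
  have h0 : ν.1 (ContinuousMap.const X 0) = 0 := by
    have h1 : (1 : C(X,ℝ)) = ContinuousMap.const X 0 + ContinuousMap.const X 1 := by
      ext x; simp
    have := ν.2.2.1 (ContinuousMap.const X 0) 1
    rw [← h1, ν.2.1] at this
    linarith
  have := ν.2.2.1 (ContinuousMap.const X 0) c
  rw [show ContinuousMap.const X 0 + ContinuousMap.const X c = ContinuousMap.const X c by ext x; simp, h0, zero_add] at this
  exact this

lemma mono (ν : ↥(OF X)) {f g : C(X,ℝ)} (h : ∀ x, f x ≤ g x) : ν.1 f ≤ ν.1 g :=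
  ν.2.2.2 f g h

lemma le_add_const (ν : ↥(OF X)) {f g : C(X,ℝ)} {c : ℝ} (h : ∀ x, f x ≤ g x + c) :
    ν.1 f ≤ ν.1 g + c := by
  have h1 : ν.1 f ≤ ν.1 (g + ContinuousMap.const X c) := mono ν (by simpa using h)
  rwa [ν.2.2.1 g c] at h1

lemma nu_abs_sub_le (ν : ↥(OF X)) {f g : C(X,ℝ)} {c : ℝ} (h : ∀ x, |f x - g x| ≤ c) :
    |ν.1 f - ν.1 g| ≤ c := by
  have h1 : ν.1 f ≤ ν.1 g + c := le_add_const ν (fun x => by have := (abs_le.1 (h x)).2; linarith)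
  have h2 : ν.1 g ≤ ν.1 f + c := le_add_const ν (fun x => by have := (abs_le.1 (h x)).1; linarith)
  rw [abs_le]; constructor <;> linarith

/-- Dirac functional. -/
def dirac (x : X) : ↥(OF X) :=
  ⟨fun φ => φ x, by simp, fun φ c => by simp, fun φ ψ h => h x⟩

/-- OF X is a compact set. -/
lemma isCompact_OF [CompactSpace X] : IsCompact (OF X) := by
  have hsub : OF X ⊆ Set.pi Set.univ (fun φ : C(X,ℝ) => Set.Icc (-‖φ‖) ‖φ‖) := by
    intro ν hν
    intro φ _
    have hb : ∀ x, |φ x| ≤ ‖φ‖ := fun x => by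
      simpa [Real.norm_eq_abs] using ContinuousMap.norm_coe_le_norm φ x
    constructor
    · have h1 : (⟨ν, hν⟩ : ↥(OF X)).1 (ContinuousMap.const X (-‖φ‖)) ≤ (⟨ν, hν⟩ : ↥(OF X)).1 φ :=
        mono _ (fun x => by
          have := (abs_le.1 (hb x)).1
          simpa using this)
      rwa [map_const] at h1
    · have h1 : (⟨ν, hν⟩ : ↥(OF X)).1 φ ≤ (⟨ν, hν⟩ : ↥(OF X)).1 (ContinuousMap.const X ‖φ‖) :=
        mono _ (fun x => by
          have := (abs_le.1 (hb x)).2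
          simpa using this)
      rwa [map_const] at h1
  have hclosed : IsClosed (OF X) := by
    have h1 : IsClosed {ν : C(X,ℝ) → ℝ | ν 1 = 1} :=
      isClosed_eq (continuous_apply 1) continuous_const
    have h2 : IsClosed {ν : C(X,ℝ) → ℝ |
        ∀ (φ : C(X, ℝ)) (c : ℝ), ν (φ + ContinuousMap.const X c) = ν φ + c} := by
      have : {ν : C(X,ℝ) → ℝ | ∀ (φ : C(X, ℝ)) (c : ℝ),
          ν (φ + ContinuousMap.const X c) = ν φ + c} =
          ⋂ (φ : C(X,ℝ)) (c : ℝ), {ν | ν (φ + ContinuousMap.const X c) = ν φ + c} := by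
        ext ν; simp
      rw [this]
      exact isClosed_iInter fun φ => isClosed_iInter fun c =>
        isClosed_eq (continuous_apply _) ((continuous_apply _).add continuous_const)
    have h3 : IsClosed {ν : C(X,ℝ) → ℝ | ∀ φ ψ : C(X, ℝ), φ ≤ ψ → ν φ ≤ ν ψ} := by
      have : {ν : C(X,ℝ) → ℝ | ∀ φ ψ : C(X, ℝ), φ ≤ ψ → ν φ ≤ ν ψ} =
          ⋂ (φ : C(X,ℝ)) (ψ : C(X,ℝ)) (_ : φ ≤ ψ), {ν | ν φ ≤ ν ψ} := by
        ext ν; simp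
      rw [this]
      exact isClosed_iInter fun φ => isClosed_iInter fun ψ => isClosed_iInter fun _ =>
        isClosed_le (continuous_apply _) (continuous_apply _)
    exact (h1.inter (h2.inter h3))
  have hpi : IsCompact (Set.pi Set.univ (fun φ : C(X,ℝ) => Set.Icc (-‖φ‖) ‖φ‖)) :=
    isCompact_univ_pi (fun φ => isCompact_Icc)
  exact hpi.of_isClosed_subset hclosed hsub

instance instCompactOF [CompactSpace X] : CompactSpace ↥(OF X) := isCompact_iff_compactSpace.mp isCompact_OF

lemma OF_empty [IsEmpty X] : IsEmpty ↥(OF X) := by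
  constructor
  rintro ⟨ν, h1, h2, h3⟩
  have hsub : ∀ f g : C(X,ℝ), f = g := fun f g => by ext x; exact isEmptyElim x
  have := h2 (ContinuousMap.const X 0) 1
  rw [hsub (ContinuousMap.const X 0 + ContinuousMap.const X 1) (ContinuousMap.const X 0)] at this
  linarith


end OFAux

namespace OFAux


variable {X : Type*} [MetricSpace X] [CompactSpace X] [Nonempty X]

lemma hbφ (φ : C(X,ℝ)) (x : X) : |φ x| ≤ ‖φ‖ := by
  simpa [Real.norm_eq_abs] using ContinuousMap.norm_coe_le_norm φ x

lemma sc_bdd (n : ℕ) (φ : C(X,ℝ)) (x : X) :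
    BddAbove (Set.range fun y => φ y - n * dist x y) := by
  refine ⟨‖φ‖, ?_⟩
  rintro r ⟨y, rfl⟩
  have h1 : φ y ≤ ‖φ‖ := (abs_le.1 (hbφ φ y)).2
  have h2 : (0:ℝ) ≤ n * dist x y := by positivity
  show φ y - n * dist x y ≤ ‖φ‖
  linarith

noncomputable def scFun (n : ℕ) (φ : C(X,ℝ)) (x : X) : ℝ := ⨆ y, (φ y - n * dist x y)

lemma scFun_le_norm (n : ℕ) (φ : C(X,ℝ)) (x : X) : scFun n φ x ≤ ‖φ‖ := by
  refine ciSup_le fun y => ?_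
  have h1 : φ y ≤ ‖φ‖ := (abs_le.1 (hbφ φ y)).2
  have h2 : (0:ℝ) ≤ n * dist x y := by positivity
  linarith

lemma le_scFun (n : ℕ) (φ : C(X,ℝ)) (x : X) : φ x ≤ scFun n φ x := by
  have := le_ciSup (sc_bdd n φ x) x
  simpa [scFun] using this

lemma scFun_le_of_forall (n : ℕ) (φ : C(X,ℝ)) (x : X) {r : ℝ}
    (h : ∀ y, φ y - n * dist x y ≤ r) : scFun n φ x ≤ r := ciSup_le h

lemma scFun_lip (n : ℕ) (φ : C(X,ℝ)) (x x' : X) :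
    scFun n φ x ≤ scFun n φ x' + n * dist x x' := by
  refine ciSup_le fun y => ?_
  have h1 : φ y - n * dist x' y ≤ scFun n φ x' := le_ciSup (sc_bdd n φ x') y
  have h2 : dist x' y ≤ dist x' x + dist x y := dist_triangle x' x y
  have h3 : (n:ℝ) ≥ 0 := by positivity
  have h4 : (n:ℝ) * dist x' y ≤ n * dist x y + n * dist x x' := by
    have := mul_le_mul_of_nonneg_left h2 h3
    rw [dist_comm x' x] at this
    nlinarith
  linarith

noncomputable def sc (n : ℕ) (φ : C(X,ℝ)) : C(X,ℝ) := by
  refine ⟨scFun n φ, ?_⟩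
  have : LipschitzWith n (scFun n φ) := by
    refine LipschitzWith.of_dist_le_mul fun x x' => ?_
    rw [Real.dist_eq, abs_sub_le_iff]
    constructor
    · have := scFun_lip n φ x x'
      push_cast
      linarith
    · have := scFun_lip n φ x' x
      rw [dist_comm] at this
      push_cast
      linarith
  exact this.continuous

lemma sc_apply (n : ℕ) (φ : C(X,ℝ)) (x : X) : sc n φ x = scFun n φ x := rfl

lemma le_sc (n : ℕ) (φ : C(X,ℝ)) : ∀ x, φ x ≤ sc n φ x := le_scFun n φ

lemma sc_mono (n : ℕ) {φ ψ : C(X,ℝ)} (h : ∀ x, φ x ≤ ψ x) : ∀ x, sc n φ x ≤ sc n ψ x := by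
  intro x
  refine ciSup_le fun y => ?_
  exact le_trans (by have := h y; linarith) (le_ciSup (sc_bdd n ψ x) y)

lemma iSup_add_const {ι : Type*} [Nonempty ι] (f : ι → ℝ) (h : BddAbove (Set.range f))
    (c : ℝ) : (⨆ i, f i + c) = (⨆ i, f i) + c := by
  apply le_antisymm
  · refine ciSup_le fun i => ?_
    have := le_ciSup h i
    linarith
  · have h2 : BddAbove (Set.range fun i => f i + c) := by
      obtain ⟨b, hb⟩ := h
      refine ⟨b + c, ?_⟩
      rintro r ⟨i, rfl⟩
      have := hb ⟨i, rfl⟩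
      show f i + c ≤ b + c
      linarith
    have h3 : (⨆ i, f i) ≤ (⨆ i, f i + c) - c := by
      refine ciSup_le fun i => ?_
      have := le_ciSup h2 i
      linarith
    linarith

lemma scFun_def (n : ℕ) (φ : C(X,ℝ)) (x : X) :
    scFun n φ x = ⨆ y, φ y - n * dist x y := rfl

lemma sc_add_const (n : ℕ) (φ : C(X,ℝ)) (c : ℝ) :
    sc n (φ + ContinuousMap.const X c) = sc n φ + ContinuousMap.const X c := by
  ext x
  show scFun n (φ + ContinuousMap.const X c) x = scFun n φ x + c
  rw [scFun_def, scFun_def]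
  have e1 : (fun y => (φ + ContinuousMap.const X c) y - ↑n * dist x y)
      = fun y => (φ y - ↑n * dist x y) + c := by
    funext y
    show φ y + c - ↑n * dist x y = (φ y - ↑n * dist x y) + c
    ring
  calc (⨆ y, (φ + ContinuousMap.const X c) y - ↑n * dist x y)
      = ⨆ y, (φ y - ↑n * dist x y) + c := by rw [e1]
    _ = (⨆ y, φ y - ↑n * dist x y) + c := iSup_add_const _ (sc_bdd n φ x) c

lemma sc_one (n : ℕ) : sc n (1 : C(X,ℝ)) = 1 := by
  ext x
  apply le_antisymm
  · refine ciSup_le fun y => ?_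
    have : (0:ℝ) ≤ n * dist x y := by positivity
    simp only [ContinuousMap.one_apply]
    linarith
  · simpa using le_sc n 1 x

/-- diameter bound -/
noncomputable def DD (X : Type*) [MetricSpace X] : ℝ := Metric.diam (Set.univ : Set X)

lemma dist_le_DD (x y : X) : dist x y ≤ DD X :=
  Metric.dist_le_diam_of_mem isCompact_univ.isBounded trivial trivial

lemma sc_lower (n : ℕ) (φ : C(X,ℝ)) (x₀ x : X) :
    φ x₀ - n * DD X ≤ sc n φ x := by
  have h1 : φ x₀ - n * dist x x₀ ≤ scFun n φ x := le_ciSup (sc_bdd n φ x) x₀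
  have h2 : (n:ℝ) * dist x x₀ ≤ n * DD X := by
    have := dist_le_DD x x₀
    have h3 : (0:ℝ) ≤ n := by positivity
    nlinarith
  rw [sc_apply]
  linarith

lemma sc_tail (φ : C(X,ℝ)) {δ : ℝ} (hδ : 0 < δ) :
    ∃ N : ℕ, ∀ n ≥ N, ∀ x, sc n φ x ≤ φ x + δ := by
  obtain ⟨r, hr, hmod⟩ := Metric.uniformContinuous_iff.mp
    (CompactSpace.uniformContinuous_of_continuous φ.continuous) δ hδ
  obtain ⟨N, hN⟩ := exists_nat_ge (2 * ‖φ‖ / r)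
  refine ⟨N, fun n hn x => ?_⟩
  refine scFun_le_of_forall n φ x fun y => ?_
  rcases lt_or_ge (dist x y) r with hlt | hge
  · have h1 : dist (φ y) (φ x) < δ := by
      rw [dist_comm] at hlt
      exact hmod hlt
    rw [Real.dist_eq] at h1
    have h2 : φ y - φ x ≤ δ := le_of_lt (lt_of_abs_lt h1)
    have h3 : (0:ℝ) ≤ n * dist x y := by positivity
    linarith
  · have h1 : φ y ≤ ‖φ‖ := (abs_le.1 (hbφ φ y)).2
    have h2 : -‖φ‖ ≤ φ x := (abs_le.1 (hbφ φ x)).1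
    have h3 : 2 * ‖φ‖ ≤ N * r := by
      rw [div_le_iff₀ hr] at hN
      exact hN
    have h4 : (N:ℝ) * r ≤ n * dist x y := by
      have hn' : (N:ℝ) ≤ n := by exact_mod_cast hn
      have : (0:ℝ) ≤ N := by positivity
      nlinarith
    linarith

/-- The regularization operator on functionals. -/
noncomputable def Rmap (n : ℕ) (ν : ↥(OF X)) : ↥(OF X) := by
  refine ⟨fun φ => ν.1 (sc n φ), ?_, ?_, ?_⟩
  · show ν.1 (sc n 1) = 1
    rw [sc_one]; exact ν.2.1
  · intro φ c
    show ν.1 (sc n (φ + ContinuousMap.const X c)) = ν.1 (sc n φ) + c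
    rw [sc_add_const]; exact ν.2.2.1 _ c
  · intro φ ψ h
    exact ν.2.2.2 _ _ (sc_mono n h)

lemma Rmap_continuous (n : ℕ) : Continuous (Rmap (X := X) n) := by
  refine Continuous.subtype_mk ?_ _
  exact continuous_pi fun φ => (continuous_apply (sc n φ)).comp continuous_subtype_val


end OFAux
namespace OFAux

variable {X : Type*} [MetricSpace X] [CompactSpace X] [Nonempty X]

lemma UC (Φ : C(↥(OF X), ℝ)) {ε : ℝ} (hε : 0 < ε) :
    ∃ n : ℕ, ∀ ν : ↥(OF X), |Φ (Rmap n ν) - Φ ν| < ε := by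
  set A : ℕ → Set (↥(OF X) × ↥(OF X)) :=
    fun k => {p | ∃ m : ℕ, k ≤ m ∧ p.1 = Rmap m p.2} with hA
  set D : ℕ → Set (↥(OF X) × ↥(OF X)) :=
    fun k => closure (A k) ∩ {p | ε ≤ |Φ p.1 - Φ p.2|} with hD
  have hBc : IsClosed {p : ↥(OF X) × ↥(OF X) | ε ≤ |Φ p.1 - Φ p.2|} := by
    have hc : Continuous fun p : ↥(OF X) × ↥(OF X) => |Φ p.1 - Φ p.2| :=
      ((Φ.continuous.comp continuous_fst).sub (Φ.continuous.comp continuous_snd)).abs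
    exact isClosed_le continuous_const hc
  have hDclosed : ∀ k, IsClosed (D k) := fun k => isClosed_closure.inter hBc
  have hdec : ∀ k, D (k+1) ⊆ D k := by
    intro k
    apply Set.inter_subset_inter_left
    apply closure_mono
    rintro p ⟨m, hm, hp⟩
    exact ⟨m, le_trans (Nat.le_succ k) hm, hp⟩
  have hkey : ∀ p : ↥(OF X) × ↥(OF X), (∀ k, p ∈ closure (A k)) → p.1 = p.2 := by
    intro p hp
    have habs : ∀ δ : ℝ, 0 < δ → ∀ φ : C(X,ℝ), |p.1.1 φ - p.2.1 φ| ≤ 3 * δ := by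
      intro δ hδ φ
      obtain ⟨N, hN⟩ := sc_tail φ hδ
      have c1 : Continuous fun q : ↥(OF X) × ↥(OF X) => q.1.1 φ :=
        ((continuous_apply φ).comp continuous_subtype_val).comp continuous_fst
      have c2 : Continuous fun q : ↥(OF X) × ↥(OF X) => q.2.1 φ :=
        ((continuous_apply φ).comp continuous_subtype_val).comp continuous_snd
      set o : Set (↥(OF X) × ↥(OF X)) :=
        {q | |q.1.1 φ - p.1.1 φ| < δ ∧ |q.2.1 φ - p.2.1 φ| < δ} with ho
      have hoopen : IsOpen o := by
        have o1 : IsOpen {q : ↥(OF X) × ↥(OF X) | |q.1.1 φ - p.1.1 φ| < δ} :=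
          isOpen_lt ((c1.sub continuous_const).abs) continuous_const
        have o2 : IsOpen {q : ↥(OF X) × ↥(OF X) | |q.2.1 φ - p.2.1 φ| < δ} :=
          isOpen_lt ((c2.sub continuous_const).abs) continuous_const
        exact o1.inter o2
      have hpo : p ∈ o := by
        constructor <;> simpa using hδ
      obtain ⟨q, hqo, hqA⟩ := mem_closure_iff.mp (hp N) o hoopen hpo
      obtain ⟨m, hmN, hq1⟩ := hqA
      have hmid : |q.1.1 φ - q.2.1 φ| ≤ δ := by
        have he : q.1.1 φ = q.2.1 (sc m φ) := by rw [hq1]; rfl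
        rw [he]
        exact nu_abs_sub_le (ν := q.2) fun x => by
          rw [abs_le]
          exact ⟨by have := le_sc m φ x; linarith, by have := hN m hmN x; linarith⟩
      have t1 := hqo.1
      have t2 := hqo.2
      calc |p.1.1 φ - p.2.1 φ|
          ≤ |p.1.1 φ - q.1.1 φ| + |q.1.1 φ - p.2.1 φ| := _root_.abs_sub_le _ _ _
        _ ≤ |p.1.1 φ - q.1.1 φ| + (|q.1.1 φ - q.2.1 φ| + |q.2.1 φ - p.2.1 φ|) := by
            have := _root_.abs_sub_le (q.1.1 φ) (q.2.1 φ) (p.2.1 φ)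
            linarith
        _ ≤ 3 * δ := by
            rw [abs_sub_comm] at t1
            linarith [le_of_lt t1, le_of_lt t2, hmid]
    apply Subtype.ext
    funext φ
    by_contra hne
    have hpos : 0 < |p.1.1 φ - p.2.1 φ| := by
      rcases abs_pos.mpr (sub_ne_zero.mpr hne) with h
      exact h
    have := habs (|p.1.1 φ - p.2.1 φ| / 4) (by linarith) φ
    linarith
  have hempty : ∃ k, D k = ∅ := by
    by_contra hne
    push_neg at hne
    have hnonempty : ∀ k, (D k).Nonempty := fun k => by simpa using hne k
    have := IsCompact.nonempty_iInter_of_sequence_nonempty_isCompact_isClosed D hdec hnonempty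
      ((hDclosed 0).isCompact) hDclosed
    obtain ⟨p, hp⟩ := this
    have hpall : ∀ k, p ∈ closure (A k) := fun k => ((Set.mem_iInter.mp hp) k).1
    have heq : p.1 = p.2 := hkey p hpall
    have hge2 : ε ≤ |Φ p.1 - Φ p.2| := ((Set.mem_iInter.mp hp) 0).2
    rw [heq] at hge2
    simp at hge2
    linarith
  obtain ⟨k, hk⟩ := hempty
  refine ⟨k, fun ν => ?_⟩
  have hmem : (Rmap k ν, ν) ∈ closure (A k) :=
    subset_closure ⟨k, le_refl k, rfl⟩
  by_contra hcon
  push_neg at hcon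
  have : (Rmap k ν, ν) ∈ D k := ⟨hmem, hcon⟩
  rw [hk] at this
  exact this

end OFAux
namespace OFAux

variable {X : Type*} [MetricSpace X] [CompactSpace X] [Nonempty X]

lemma piO_le_iff (Φ : C(↥(OF X), ℝ)) (φ : C(X,ℝ)) :
    piO X φ ≤ Φ ↔ ∀ ν : ↥(OF X), ν.1 φ ≤ Φ ν := by
  rw [ContinuousMap.le_def]
  rfl

lemma shift (Φ : C(↥(OF X), ℝ)) {ε : ℝ} (hε : 0 < ε) :
    ∃ n : ℕ, ∀ φ : C(X,ℝ), piO X φ ≤ Φ →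
      piO X (sc n φ + ContinuousMap.const X (-ε)) ≤ Φ := by
  obtain ⟨n, hn⟩ := UC Φ hε
  refine ⟨n, fun φ hφ => ?_⟩
  rw [piO_le_iff] at hφ ⊢
  intro ν
  have hwa := ν.2.2.1 (sc n φ) (-ε)
  rw [hwa]
  have h1 : ν.1 (sc n φ) = (Rmap n ν).1 φ := rfl
  have h2 : (Rmap n ν).1 φ ≤ Φ (Rmap n ν) := hφ (Rmap n ν)
  have h3 := (abs_lt.1 (hn ν)).2
  linarith [h1 ▸ h2]

lemma net (Φ : C(↥(OF X), ℝ)) {ε : ℝ} (hε : 0 < ε) :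
    ∃ t : Finset C(X,ℝ), (∀ ψ ∈ t, piO X ψ ≤ Φ) ∧ t.Nonempty ∧
      ∀ φ : C(X,ℝ), piO X φ ≤ Φ → ∃ ψ ∈ t, ∀ x, φ x ≤ ψ x + ε := by
  classical
  haveI : Nonempty ↥(OF X) := ⟨dirac (Classical.arbitrary X)⟩
  set B := ‖Φ‖ with hBdef
  have hΦb : ∀ ν : ↥(OF X), |Φ ν| ≤ B := fun ν => by
    simpa [Real.norm_eq_abs] using ContinuousMap.norm_coe_le_norm Φ ν
  have hB0 : 0 ≤ B := norm_nonneg Φ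
  -- the constant -B is in S
  have hcB : piO X (ContinuousMap.const X (-B)) ≤ Φ := by
    rw [piO_le_iff]
    intro ν
    have : ν.1 (ContinuousMap.const X (-B)) = -B := map_const ν (-B)
    rw [this]
    have := (abs_le.1 (hΦb ν)).1
    linarith
  -- upper bound for members of S
  have hub : ∀ φ : C(X,ℝ), piO X φ ≤ Φ → ∀ x, φ x ≤ B := by
    intro φ hφ x
    have h1 : (dirac x).1 φ ≤ Φ (dirac x) := (piO_le_iff Φ φ).1 hφ (dirac x)
    have h2 : (dirac x).1 φ = φ x := rfl
    have h3 := (abs_le.1 (hΦb (dirac x))).2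
    rw [h2] at h1
    linarith
  have hε4 : 0 < ε/4 := by linarith
  obtain ⟨n, hn⟩ := shift Φ hε4
  set d : ℝ := ε/4 with hddef
  set r : ℝ := ε / (8 * (n+1)) with hrdef
  have hr : 0 < r := by
    apply div_pos hε
    positivity
  have hnr : (n:ℝ) * r ≤ ε/8 := by
    rw [hrdef, ← mul_div_assoc, div_le_div_iff₀ (by positivity) (by norm_num : (0:ℝ) < 8)]
    nlinarith [hε, Nat.cast_nonneg (α := ℝ) n]
  obtain ⟨net, hnet_sub, hnet_fin, hnet_cov⟩ := isCompact_univ.finite_cover_balls (X := X) hr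
  set lo : ℝ := -B - n * DD X - d with hlodef
  -- the regularized family
  set F : Set C(X,ℝ) := {g | piO X g ≤ Φ ∧ (∀ x x', g x ≤ g x' + n * dist x x')
      ∧ (∀ x, lo ≤ g x) ∧ (∀ x, g x ≤ B)} with hFdef
  -- quantization
  letI := hnet_fin.fintype
  set vec : C(X,ℝ) → (↥net → ℤ) := fun g i => ⌊g i.1 / d⌋ with hvecdef
  set Im : Set (↥net → ℤ) := vec '' F with hImdef
  have hd0 : 0 < d := hε4
  have hImfin : Im.Finite := by
    apply Set.Finite.subset (Set.Finite.pi (fun _ : ↥net => Set.finite_Icc ⌊lo/d⌋ ⌊B/d⌋))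
    rintro v ⟨g, hg, rfl⟩
    intro i _
    refine ⟨Int.floor_mono ?_, Int.floor_mono ?_⟩
    · have h1 := hg.2.2.1 i.1
      exact by gcongr
    · have h1 := hg.2.2.2 i.1
      exact by gcongr
  -- choice of representatives
  set pick : (↥net → ℤ) → C(X,ℝ) := fun v =>
    if hv : v ∈ Im then Classical.choose hv else ContinuousMap.const X (-B) with hpickdef
  have hpick1 : ∀ v ∈ Im, pick v ∈ F ∧ vec (pick v) = v := by
    intro v hv
    rw [hpickdef]
    simp only [dif_pos hv]
    exact ⟨(Classical.choose_spec hv).1, (Classical.choose_spec hv).2⟩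
  set t : Finset C(X,ℝ) :=
    insert (ContinuousMap.const X (-B)) (hImfin.toFinset.image pick) with htdef
  refine ⟨t, ?_, ?_, ?_⟩
  · intro ψ hψ
    rw [htdef] at hψ
    rcases Finset.mem_insert.mp hψ with h | h
    · rw [h]; exact hcB
    · obtain ⟨v, hv, rfl⟩ := Finset.mem_image.mp h
      rw [Set.Finite.mem_toFinset] at hv
      exact ((hpick1 v hv).1).1
  · exact ⟨_, Finset.mem_insert_self _ _⟩
  · intro φ hφ
    by_cases hbig : ∃ x, -B < φ x
    · -- regularize
      set ψφ : C(X,ℝ) := sc n φ + ContinuousMap.const X (-d) with hψφdef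
      have hψφS : piO X ψφ ≤ Φ := hn φ hφ
      have hψφval : ∀ x, ψφ x = sc n φ x - d := fun x => by
        rw [hψφdef]
        simp only [ContinuousMap.add_apply, ContinuousMap.const_apply]
        ring
      have hψφlip : ∀ x x', ψφ x ≤ ψφ x' + n * dist x x' := by
        intro x x'
        rw [hψφval, hψφval]
        have := scFun_lip n φ x x'
        rw [sc_apply, sc_apply]
        linarith
      have hψφlo : ∀ x, lo ≤ ψφ x := by
        intro x
        obtain ⟨x₀, hx₀⟩ := hbig
        have := sc_lower n φ x₀ x
        rw [hψφval, hlodef]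
        linarith
      have hψφhi : ∀ x, ψφ x ≤ B := by
        intro x
        have h1 : scFun n φ x ≤ B := by
          refine ciSup_le fun y => ?_
          have h2 : φ y ≤ B := hub φ hφ y
          have h3 : (0:ℝ) ≤ n * dist x y := by positivity
          linarith
        have h2 : sc n φ x = scFun n φ x := sc_apply n φ x
        rw [hψφval x]
        linarith
      have hψφF : ψφ ∈ F := ⟨hψφS, hψφlip, hψφlo, hψφhi⟩
      have hvIm : vec ψφ ∈ Im := ⟨ψφ, hψφF, rfl⟩
      set ψ' := pick (vec ψφ) with hψ'def
      obtain ⟨hψ'F, hψ'vec⟩ := hpick1 _ hvIm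
      refine ⟨ψ', ?_, ?_⟩
      · rw [htdef]
        apply Finset.mem_insert_of_mem
        apply Finset.mem_image.mpr
        exact ⟨vec ψφ, (Set.Finite.mem_toFinset _).mpr hvIm, rfl⟩
      · intro x
        -- find a net point near x
        have hx : x ∈ ⋃ y ∈ net, Metric.ball y r := hnet_cov trivial
        rw [Set.mem_iUnion₂] at hx
        obtain ⟨x₀, hx₀net, hx₀⟩ := hx
        rw [Metric.mem_ball] at hx₀
        set i : ↥net := ⟨x₀, hx₀net⟩ with hidef
        -- same quantization at x₀
        have hfloor : ⌊ψφ x₀ / d⌋ = ⌊ψ' x₀ / d⌋ := by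
          have := congrFun hψ'vec i
          rw [hvecdef] at this
          exact this.symm
        have hquant : |ψφ x₀ - ψ' x₀| < d := by
          have ha1 : (⌊ψφ x₀ / d⌋ : ℝ) ≤ ψφ x₀ / d := Int.floor_le _
          have ha2 : ψφ x₀ / d < ⌊ψφ x₀ / d⌋ + 1 := Int.lt_floor_add_one _
          have hb1 : (⌊ψ' x₀ / d⌋ : ℝ) ≤ ψ' x₀ / d := Int.floor_le _
          have hb2 : ψ' x₀ / d < ⌊ψ' x₀ / d⌋ + 1 := Int.lt_floor_add_one _
          rw [hfloor] at ha1 ha2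
          have hsub : |ψφ x₀ / d - ψ' x₀ / d| < 1 := by
            rw [abs_lt]; constructor <;> linarith
          rw [div_sub_div_same, abs_div, abs_of_pos hd0] at hsub
          exact (div_lt_one hd0).mp hsub
        have l1 : φ x ≤ ψφ x + d := by
          have := le_sc n φ x
          rw [hψφval]
          linarith
        have l2 : ψφ x ≤ ψφ x₀ + ε/8 := by
          have := hψφlip x x₀
          have h4 : (n:ℝ) * dist x x₀ ≤ ε/8 := by
            have h5 : (n:ℝ) * dist x x₀ ≤ n * r := by
              have : (0:ℝ) ≤ n := by positivity
              nlinarith [le_of_lt hx₀]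
            linarith [hnr]
          linarith
        have l3 : ψ' x₀ ≤ ψ' x + ε/8 := by
          have := hψ'F.2.1 x₀ x
          have h4 : (n:ℝ) * dist x₀ x ≤ ε/8 := by
            rw [dist_comm]
            have h5 : (n:ℝ) * dist x x₀ ≤ n * r := by
              have : (0:ℝ) ≤ n := by positivity
              nlinarith [le_of_lt hx₀]
            linarith [hnr]
          linarith
        have l4 : ψφ x₀ ≤ ψ' x₀ + d := by
          have := (abs_lt.1 hquant).2
          linarith
        have hdd : d = ε/4 := hddef
        linarith
    · -- φ ≤ -B everywhere
      push_neg at hbig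
      refine ⟨ContinuousMap.const X (-B), Finset.mem_insert_self _ _, fun x => ?_⟩
      have := hbig x
      simp only [ContinuousMap.const_apply]
      linarith

end OFAux
namespace OFAux

variable {X : Type*} [MetricSpace X] [CompactSpace X] [Nonempty X]

lemma M_map_const {Y : Type*} [TopologicalSpace Y] (M : ↥(OF Y)) (c : ℝ) :
    M.1 (ContinuousMap.const Y c) = c := map_const M c

lemma sup_continuous (Φ : C(↥(OF X), ℝ)) :
    Continuous (fun M : ↥(OF (↥(OF X))) =>
      sSup ((fun φ : C(X, ℝ) => M.1 (piO X φ)) '' {φ : C(X, ℝ) | piO X φ ≤ Φ})) := by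
  classical
  set S : Set C(X,ℝ) := {φ : C(X, ℝ) | piO X φ ≤ Φ} with hSdef
  set Ffun : ↥(OF (↥(OF X))) → ℝ :=
    fun M => sSup ((fun φ : C(X, ℝ) => M.1 (piO X φ)) '' S) with hFfun
  -- target is continuity of Ffun
  show Continuous Ffun
  have hbdd : ∀ M : ↥(OF (↥(OF X))), ∀ b ∈ (fun φ : C(X, ℝ) => M.1 (piO X φ)) '' S,
      b ≤ M.1 Φ := by
    rintro M b ⟨φ, hφ, rfl⟩
    exact M.2.2.2 _ _ hφ
  -- nets for each k
  have hnets : ∀ k : ℕ, ∃ t : Finset C(X,ℝ), (∀ ψ ∈ t, piO X ψ ≤ Φ) ∧ t.Nonempty ∧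
      ∀ φ : C(X,ℝ), piO X φ ≤ Φ → ∃ ψ ∈ t, ∀ x, φ x ≤ ψ x + 1/(k+1) := by
    intro k
    exact net Φ (by positivity)
  choose ts hts1 hts2 hts3 using hnets
  set g : ℕ → ↥(OF (↥(OF X))) → ℝ :=
    fun k M => (ts k).sup' (hts2 k) (fun ψ => M.1 (piO X ψ)) with hgdef
  have hgcont : ∀ k, Continuous (g k) := by
    intro k
    refine Continuous.finset_sup'_apply (hts2 k) ?_
    intro ψ _
    exact (continuous_apply (piO X ψ)).comp continuous_subtype_val
  have hgle : ∀ k M, g k M ≤ Ffun M := by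
    intro k M
    refine Finset.sup'_le _ _ fun ψ hψ => ?_
    refine le_csSup ⟨M.1 Φ, hbdd M⟩ ?_
    exact ⟨ψ, hts1 k ψ hψ, rfl⟩
  have hleg : ∀ k M, Ffun M ≤ g k M + 1/(k+1) := by
    intro k M
    have hSne : ((fun φ : C(X, ℝ) => M.1 (piO X φ)) '' S).Nonempty := by
      obtain ⟨ψ₀, hψ₀⟩ := hts2 k
      exact ⟨_, ⟨ψ₀, hts1 k ψ₀ hψ₀, rfl⟩⟩
    refine csSup_le hSne ?_
    rintro b ⟨φ, hφ, rfl⟩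
    obtain ⟨ψ, hψt, hψ⟩ := hts3 k φ hφ
    have step : M.1 (piO X φ) ≤ M.1 (piO X ψ) + 1/(k+1) := by
      have hpi : ∀ ν : ↥(OF X), (piO X φ) ν ≤ (piO X ψ) ν + 1/(k+1) := by
        intro ν
        exact le_add_const ν hψ
      exact le_add_const M hpi
    have : M.1 (piO X ψ) ≤ g k M := Finset.le_sup' (fun ψ => M.1 (piO X ψ)) hψt
    linarith
  have huniform : TendstoUniformly g Ffun Filter.atTop := by
    rw [Metric.tendstoUniformly_iff]
    intro ε hε
    have htend := tendsto_one_div_add_atTop_nhds_zero_nat (𝕜 := ℝ)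
    have hev : ∀ᶠ k : ℕ in Filter.atTop, 1/((k:ℝ)+1) < ε := by
      have := htend.eventually (eventually_lt_nhds hε)
      exact this
    filter_upwards [hev] with k hk M
    rw [Real.dist_eq]
    have h1 := hgle k M
    have h2 := hleg k M
    rw [abs_lt]
    constructor <;> [linarith; linarith]
  exact huniform.continuous (Filter.Frequently.of_forall hgcont)

end OFAux
namespace OFAux

open Pointwise

variable {Y : Type*} [TopologicalSpace Y]

lemma neg_one_eq : -(1 : C(Y,ℝ)) = ContinuousMap.const Y (-1) := by ext y; simp

lemma neg_add_const (φ : C(Y,ℝ)) (c : ℝ) :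
    -(φ + ContinuousMap.const Y c) = -φ + ContinuousMap.const Y (-c) := by
  ext y; simp; ring

/-- The involution ν ↦ (φ ↦ -ν(-φ)) on OF Y. -/
def flipOF (ν : ↥(OF Y)) : ↥(OF Y) := by
  refine ⟨fun φ => -(ν.1 (-φ)), ?_, ?_, ?_⟩
  · show -(ν.1 (-1)) = 1
    rw [neg_one_eq, map_const]
    norm_num
  · intro φ c
    show -(ν.1 (-(φ + ContinuousMap.const Y c))) = -(ν.1 (-φ)) + c
    rw [neg_add_const, ν.2.2.1 (-φ) (-c)]
    ring
  · intro φ ψ h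
    have h2 : (-ψ : C(Y,ℝ)) ≤ -φ := fun y => by
      have h3 : φ y ≤ ψ y := h y
      show -(ψ y) ≤ -(φ y)
      linarith
    have := ν.2.2.2 _ _ h2
    show -(ν.1 (-φ)) ≤ -(ν.1 (-ψ))
    linarith

lemma flipOF_continuous : Continuous (flipOF (Y := Y)) := by
  refine Continuous.subtype_mk ?_ _
  exact continuous_pi fun φ => ((continuous_apply (-φ)).comp continuous_subtype_val).neg

lemma flipOF_flipOF (ν : ↥(OF Y)) : flipOF (flipOF ν) = ν := by
  apply Subtype.ext
  funext φ
  show -(-(ν.1 (-(-φ)))) = ν.1 φ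
  rw [neg_neg, neg_neg]

/-- flipOF as a continuous map. -/
def flipCM : C(↥(OF Y), ↥(OF Y)) := ⟨flipOF, flipOF_continuous⟩

/-- The dual of Φ. -/
def flipPhi (Φ : C(↥(OF Y), ℝ)) : C(↥(OF Y), ℝ) :=
  ⟨fun ν => -(Φ (flipOF ν)), (Φ.continuous.comp flipOF_continuous).neg⟩

lemma comp_flipCM_add_const (g : C(↥(OF Y), ℝ)) (c : ℝ) :
    (g + ContinuousMap.const _ c).comp (flipCM (Y := Y))
      = g.comp flipCM + ContinuousMap.const _ c := by
  ext ν; simp [flipCM]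

/-- The dual involution at level 2. -/
def dual2 (M : ↥(OF (↥(OF Y)))) : ↥(OF (↥(OF Y))) := by
  refine ⟨fun g => -(M.1 (-(g.comp flipCM))), ?_, ?_, ?_⟩
  · show -(M.1 (-((1 : C(↥(OF Y),ℝ)).comp flipCM))) = 1
    have h1 : ((1 : C(↥(OF Y),ℝ)).comp flipCM) = 1 := by ext ν; rfl
    rw [h1, neg_one_eq, map_const]
    norm_num
  · intro g c
    show -(M.1 (-((g + ContinuousMap.const _ c).comp flipCM))) = -(M.1 (-(g.comp flipCM))) + c
    rw [comp_flipCM_add_const, neg_add_const, M.2.2.1 _ (-c)]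
    ring
  · intro g g' h
    have h2 : -(g'.comp flipCM) ≤ -(g.comp flipCM) := fun ν => by
      have := h (flipOF ν)
      simp only [ContinuousMap.neg_apply, ContinuousMap.comp_apply]
      show -(g' (flipCM ν)) ≤ -(g (flipCM ν))
      have : g (flipCM ν) ≤ g' (flipCM ν) := h (flipCM ν)
      linarith
    have := M.2.2.2 _ _ h2
    show -(M.1 (-(g.comp flipCM))) ≤ -(M.1 (-(g'.comp flipCM)))
    linarith

lemma dual2_continuous : Continuous (dual2 (Y := Y)) := by
  refine Continuous.subtype_mk ?_ _
  exact continuous_pi fun g =>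
    ((continuous_apply (-(g.comp flipCM))).comp continuous_subtype_val).neg

end OFAux

namespace OFAux

variable {X : Type*} [TopologicalSpace X]

lemma dual2_piO (M : ↥(OF (↥(OF X)))) (ψ : C(X,ℝ)) :
    (dual2 M).1 (piO X ψ) = -(M.1 (piO X (-ψ))) := by
  show -(M.1 (-((piO X ψ).comp flipCM))) = -(M.1 (piO X (-ψ)))
  have h : -((piO X ψ).comp flipCM) = piO X (-ψ) := by
    ext ν
    show -((piO X ψ) (flipOF ν)) = ν.1 (-ψ)
    show -(-(ν.1 (-ψ))) = ν.1 (-ψ)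
    rw [neg_neg]
  rw [h]

lemma dual_set_eq (Φ : C(↥(OF X), ℝ)) (M : ↥(OF (↥(OF X)))) :
    (fun φ : C(X, ℝ) => M.1 (piO X φ)) '' {φ : C(X, ℝ) | Φ ≤ piO X φ}
      = -((fun φ : C(X, ℝ) => (dual2 M).1 (piO X φ)) '' {φ : C(X, ℝ) | piO X φ ≤ flipPhi Φ}) := by
  ext r
  rw [Set.mem_neg]
  constructor
  · rintro ⟨φ, hφ, rfl⟩
    refine ⟨-φ, ?_, ?_⟩
    · intro ν
      show ν.1 (-φ) ≤ -(Φ (flipOF ν))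
      have h1 : Φ (flipOF ν) ≤ (piO X φ) (flipOF ν) := hφ (flipOF ν)
      have h2 : (piO X φ) (flipOF ν) = -(ν.1 (-φ)) := rfl
      rw [h2] at h1
      linarith
    · show (dual2 M).1 (piO X (-φ)) = -(M.1 (piO X φ))
      rw [dual2_piO, neg_neg]
  · rintro ⟨ψ, hψ, hval⟩
    refine ⟨-ψ, ?_, ?_⟩
    · intro ν
      have h1 : (piO X ψ) (flipOF ν) ≤ (flipPhi Φ) (flipOF ν) := hψ (flipOF ν)
      have h2 : (piO X ψ) (flipOF ν) = -(ν.1 (-ψ)) := rfl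
      have h3 : (flipPhi Φ) (flipOF ν) = -(Φ (flipOF (flipOF ν))) := rfl
      rw [flipOF_flipOF] at h3
      rw [h2, h3] at h1
      show Φ ν ≤ ν.1 (-ψ)
      linarith
    · have hval' : (dual2 M).1 (piO X ψ) = -r := hval
      rw [dual2_piO] at hval'
      show M.1 (piO X (-ψ)) = r
      linarith
end OFAux
namespace OFAux

open Pointwise

variable {X : Type*} [MetricSpace X] [CompactSpace X] [Nonempty X]

lemma inf_continuous (Φ : C(↥(OF X), ℝ)) :
    Continuous (fun M : ↥(OF (↥(OF X))) =>
      sInf ((fun φ : C(X, ℝ) => M.1 (piO X φ)) '' {φ : C(X, ℝ) | Φ ≤ piO X φ})) := by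
  have heq : (fun M : ↥(OF (↥(OF X))) =>
      sInf ((fun φ : C(X, ℝ) => M.1 (piO X φ)) '' {φ : C(X, ℝ) | Φ ≤ piO X φ}))
      = fun M : ↥(OF (↥(OF X))) =>
        -(sSup ((fun φ : C(X, ℝ) => (dual2 M).1 (piO X φ))
          '' {φ : C(X, ℝ) | piO X φ ≤ flipPhi Φ})) := by
    funext M
    rw [dual_set_eq Φ M, Real.sInf_def, neg_neg]
  rw [heq]
  exact ((sup_continuous (flipPhi Φ)).comp dual2_continuous).neg

end OFAux

/-- For a metrizable compact Hausdorff `X` and `Φ ∈ C(O(X))`, the maps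
`M ↦ sup{M(π_φ) : φ ∈ C(X), π_φ ≤ Φ}` and `M ↦ inf{M(π_φ) : φ ∈ C(X), π_φ ≥ Φ}`
are continuous on `O(O(X))`. -/
theorem sup_inf_approx_continuous (X : Type*) [TopologicalSpace X] [CompactSpace X]
    [T2Space X] [TopologicalSpace.MetrizableSpace X] (Φ : C(↥(OF X), ℝ)) :
    Continuous (fun M : ↥(OF (↥(OF X))) =>
      sSup ((fun φ : C(X, ℝ) => M.1 (piO X φ)) '' {φ : C(X, ℝ) | piO X φ ≤ Φ})) ∧
    Continuous (fun M : ↥(OF (↥(OF X))) =>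
      sInf ((fun φ : C(X, ℝ) => M.1 (piO X φ)) '' {φ : C(X, ℝ) | Φ ≤ piO X φ})) := by
  rcases isEmpty_or_nonempty X with hX | hX
  · haveI : IsEmpty ↥(OF X) := OFAux.OF_empty
    haveI : IsEmpty ↥(OF (↥(OF X))) := OFAux.OF_empty
    exact ⟨continuous_iff_continuousAt.mpr fun M => isEmptyElim M,
      continuous_iff_continuousAt.mpr fun M => isEmptyElim M⟩
  · letI : MetricSpace X := TopologicalSpace.metrizableSpaceMetric X
    exact ⟨OFAux.sup_continuous Φ, OFAux.inf_continuous Φ⟩
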